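/- Let P(B,A,Φ) be a trivial quantum principal bundle. The map γ ↦ Φ⁻¹ * γ * Φ is a group isomorphism from the gauge group 𝒜(B) (convolution invertible maps γ : A → B with γ(1)=1, under convolution) onto 𝒜(P) (convolution invertible maps f : A → P with f(1)=1 and Δ_R f = (f ⊗ id) Ad), with inverse f ↦ Φ * f * Φ⁻¹. -/

import Mathlib

open TensorProduct

noncomputable section

variable (k : Type*) [Field k]

/-- Convolution product of linear maps from a coalgebra to an algebra:
`(f * g)(a) = f(a₁) g(a₂)`. -/
def conv {C B : Type*} [AddCommMonoid C] [Module k C] [Coalgebra k C]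
    [Semiring B] [Algebra k B] (f g : C →ₗ[k] B) : C →ₗ[k] B :=
  LinearMap.mul' k B ∘ₗ TensorProduct.map f g ∘ₗ Coalgebra.comul

/-- The convolution unit `a ↦ ε(a) 1`. -/
def convOne {C B : Type*} [AddCommMonoid C] [Module k C] [Coalgebra k C]
    [Semiring B] [Algebra k B] : C →ₗ[k] B :=
  Algebra.linearMap k B ∘ₗ Coalgebra.counit

variable (A P : Type*) [Ring A] [HopfAlgebra k A] [Ring P] [Algebra k P]

/-- The canonical map `χ : P ⊗ P → P ⊗ A`, `u ⊗ v ↦ u v⁽¹⁾ ⊗ v⁽²⁾`,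
i.e. `χ = (mult ⊗ id) ∘ (id ⊗ Δ_R)`. -/
def chiMap (ΔR : P →ₗ[k] P ⊗[k] A) : P ⊗[k] P →ₗ[k] P ⊗[k] A :=
  TensorProduct.map (LinearMap.mul' k P) LinearMap.id ∘ₗ
    (TensorProduct.assoc k P P A).symm.toLinearMap ∘ₗ
    TensorProduct.map LinearMap.id ΔR

/-- The right adjoint coaction `Ad(a) = a₂ ⊗ S(a₁)a₃`. -/
def adCoaction : A →ₗ[k] A ⊗[k] A :=
  TensorProduct.map LinearMap.id (LinearMap.mul' k A) ∘ₗ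
    (TensorProduct.leftComm k A A A).toLinearMap ∘ₗ
    TensorProduct.map (HopfAlgebra.antipode (R := k)) LinearMap.id ∘ₗ
    TensorProduct.map LinearMap.id Coalgebra.comul ∘ₗ Coalgebra.comul

/-- The kernel of `P ⊗ P → P ⊗_B P`: the span of elements `u b ⊗ v - u ⊗ b v`
with `b` a coinvariant (`Δ_R b = b ⊗ 1`), so that `P ⊗_B P = (P ⊗ P) ⧸ relSub`. -/
def relSub (ΔR : P →ₗ[k] P ⊗[k] A) : Submodule k (P ⊗[k] P) :=
  Submodule.span k {x | ∃ u v b : P, ΔR b = b ⊗ₜ 1 ∧ x = (u * b) ⊗ₜ v - u ⊗ₜ (b * v)}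

/-- The image of `B ⊗ B` in `P ⊗ P`, where `B = Pᴬ` is the coinvariant subalgebra. -/
def BBsub (ΔR : P →ₗ[k] P ⊗[k] A) : Submodule k (P ⊗[k] P) :=
  Submodule.span k {x | ∃ b c : P, ΔR b = b ⊗ₜ 1 ∧ ΔR c = c ⊗ₜ 1 ∧ x = b ⊗ₜ c}

/-- The submodule `P B² P ⊆ P ⊗ P`, where `B² = ker(mult : B ⊗ B → B)`. -/
def PB2P (ΔR : P →ₗ[k] P ⊗[k] A) : Submodule k (P ⊗[k] P) :=
  Submodule.span k {w | ∃ u v : P, ∃ x ∈ BBsub k A P ΔR ⊓ LinearMap.ker (LinearMap.mul' k P),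
    w = TensorProduct.map (LinearMap.mulLeft k u) (LinearMap.mulRight k v) x}


section ConvGeneral
variable {K : Type*} [Field K] {C B : Type*} [AddCommMonoid C] [Module K C] [Coalgebra K C]
  [Semiring B] [Algebra K B]

lemma conv_repr (f g : C →ₗ[K] B) {a : C} {ι : Type*} (r : Coalgebra.Repr K a ι) :
    conv K f g a = ∑ i ∈ r.index, f (r.left i) * g (r.right i) := by
  rw [conv]
  simp only [LinearMap.coe_comp, Function.comp_apply]
  rw [show (Coalgebra.comul a : C ⊗[K] C) = ∑ i ∈ r.index, r.left i ⊗ₜ[K] r.right i from r.eq.symm]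
  simp [map_sum]

lemma convOne_apply' (a : C) : convOne K (B := B) a = algebraMap K B (Coalgebra.counit a) := rfl

lemma conv_one_left' (f : C →ₗ[K] B) : conv K (convOne K) f = f := by
  ext a
  rw [conv_repr (convOne K) f (Coalgebra.Repr.arbitrary K a)]
  have h := congrArg (TensorProduct.lid K B)
    (Coalgebra.sum_counit_tmul_map_eq (R := K) f a (repr := Coalgebra.Repr.arbitrary K a))
  simp only [map_sum, TensorProduct.lid_tmul, one_smul] at h
  rw [← h]
  exact Finset.sum_congr rfl fun i _ => by rw [convOne_apply', Algebra.smul_def]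

lemma conv_one_right' (f : C →ₗ[K] B) : conv K f (convOne K) = f := by
  ext a
  rw [conv_repr f (convOne K) (Coalgebra.Repr.arbitrary K a)]
  have h := congrArg (TensorProduct.rid K B)
    (Coalgebra.sum_map_tmul_counit_eq (R := K) f a (repr := Coalgebra.Repr.arbitrary K a))
  simp only [map_sum, TensorProduct.rid_tmul, one_smul] at h
  rw [← h]
  refine Finset.sum_congr rfl fun i _ => ?_
  rw [convOne_apply', ← Algebra.commutes, ← Algebra.smul_def]

lemma conv_assoc' (f g h : C →ₗ[K] B) : conv K (conv K f g) h = conv K f (conv K g h) := by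
  ext a
  have key := Coalgebra.sum_map_tmul_tmul_eq (R := K) f g h a
    (repr := Coalgebra.Repr.arbitrary K a)
    (a₁ := fun i => Coalgebra.Repr.arbitrary K ((Coalgebra.Repr.arbitrary K a).left i))
    (a₂ := fun i => Coalgebra.Repr.arbitrary K ((Coalgebra.Repr.arbitrary K a).right i))
  have key2 := congrArg (LinearMap.mul' K B ∘ₗ LinearMap.lTensor B (LinearMap.mul' K B)) key
  simp only [map_sum, LinearMap.coe_comp, Function.comp_apply, LinearMap.lTensor_tmul,
    LinearMap.mul'_apply] at key2
  rw [conv_repr (conv K f g) h (Coalgebra.Repr.arbitrary K a),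
      conv_repr f (conv K g h) (Coalgebra.Repr.arbitrary K a)]
  calc ∑ i ∈ (Coalgebra.Repr.arbitrary K a).index,
        conv K f g ((Coalgebra.Repr.arbitrary K a).left i) * h ((Coalgebra.Repr.arbitrary K a).right i)
      = ∑ i ∈ (Coalgebra.Repr.arbitrary K a).index,
          ∑ j ∈ (Coalgebra.Repr.arbitrary K ((Coalgebra.Repr.arbitrary K a).left i)).index,
          f ((Coalgebra.Repr.arbitrary K ((Coalgebra.Repr.arbitrary K a).left i)).left j) *
          (g ((Coalgebra.Repr.arbitrary K ((Coalgebra.Repr.arbitrary K a).left i)).right j) *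
           h ((Coalgebra.Repr.arbitrary K a).right i)) := by
        refine Finset.sum_congr rfl fun i _ => ?_
        rw [conv_repr f g (Coalgebra.Repr.arbitrary K ((Coalgebra.Repr.arbitrary K a).left i)),
          Finset.sum_mul]
        exact Finset.sum_congr rfl fun j _ => mul_assoc _ _ _
    _ = ∑ i ∈ (Coalgebra.Repr.arbitrary K a).index,
          f ((Coalgebra.Repr.arbitrary K a).left i) *
            conv K g h ((Coalgebra.Repr.arbitrary K a).right i) := by
        rw [← key2]
        refine Finset.sum_congr rfl fun i _ => ?_
        rw [conv_repr g h (Coalgebra.Repr.arbitrary K ((Coalgebra.Repr.arbitrary K a).right i)),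
          Finset.mul_sum]

lemma alghom_conv {B' : Type*} [Semiring B'] [Algebra K B'] (j : B →ₐ[K] B') (f g : C →ₗ[K] B) :
    j.toLinearMap ∘ₗ conv K f g = conv K (j.toLinearMap ∘ₗ f) (j.toLinearMap ∘ₗ g) := by
  ext a
  simp only [LinearMap.comp_apply, AlgHom.toLinearMap_apply,
    conv_repr _ _ (Coalgebra.Repr.arbitrary K a), map_sum, map_mul]

lemma alghom_convOne {B' : Type*} [Semiring B'] [Algebra K B'] (j : B →ₐ[K] B') :
    j.toLinearMap ∘ₗ convOne K = (convOne K : C →ₗ[K] B') := by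
  ext a
  simp [convOne_apply', AlgHom.commutes]

noncomputable local instance convMonoid : Monoid (C →ₗ[K] B) where
  mul := conv K
  one := convOne K
  mul_assoc := conv_assoc'
  one_mul := conv_one_left'
  mul_one := conv_one_right'

lemma conv_eq_mul (f g : C →ₗ[K] B) : conv K f g = f * g := rfl
lemma convOne_eq_one : (convOne K : C →ₗ[K] B) = 1 := rfl

lemma mul_cancel_left' {M : Type*} [Monoid M] {u v : M} (h : u * v = 1) (x : M) :
    u * (v * x) = x := by rw [← mul_assoc, h, one_mul]

section SpecificAux

lemma conv_antipode_id :
    conv k (HopfAlgebra.antipode (R := k)) (LinearMap.id : A →ₗ[k] A) = convOne k :=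
  HopfAlgebra.mul_antipode_rTensor_comul

lemma conv_id_antipode :
    conv k (LinearMap.id : A →ₗ[k] A) (HopfAlgebra.antipode (R := k)) = convOne k :=
  HopfAlgebra.mul_antipode_lTensor_comul

lemma conv_apply_one {B : Type*} [Semiring B] [Algebra k B] (f g : A →ₗ[k] B) :
    conv k f g 1 = f 1 * g 1 := by
  simp [conv, Algebra.TensorProduct.one_def]

lemma convOne_apply_one {B : Type*} [Semiring B] [Algebra k B] :
    convOne k (C := A) (B := B) 1 = 1 := by
  simp [convOne]

/-- `e f := (b ↦ b ⊗ 1) ∘ f`. -/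
def embMap (f : A →ₗ[k] P) : A →ₗ[k] P ⊗[k] A :=
  (Algebra.TensorProduct.includeLeft : P →ₐ[k] P ⊗[k] A).toLinearMap ∘ₗ f

/-- `t : a ↦ 1 ⊗ a`. -/
def tMap : A →ₗ[k] P ⊗[k] A :=
  (Algebra.TensorProduct.includeRight : A →ₐ[k] P ⊗[k] A).toLinearMap

/-- `s : a ↦ 1 ⊗ S(a)`. -/
def sMap : A →ₗ[k] P ⊗[k] A := tMap k A P ∘ₗ HopfAlgebra.antipode (R := k)

lemma embMap_conv (f g : A →ₗ[k] P) :
    embMap k A P (conv k f g) = conv k (embMap k A P f) (embMap k A P g) :=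
  alghom_conv _ f g

lemma embMap_convOne : embMap k A P (convOne k) = convOne k :=
  alghom_convOne _

lemma conv_t_s : conv k (tMap k A P) (sMap k A P) = convOne k := by
  have h := alghom_conv (Algebra.TensorProduct.includeRight : A →ₐ[k] P ⊗[k] A)
      (LinearMap.id : A →ₗ[k] A) (HopfAlgebra.antipode (R := k))
  rw [conv_id_antipode, alghom_convOne] at h
  have h3 : conv k ((Algebra.TensorProduct.includeRight : A →ₐ[k] P ⊗[k] A).toLinearMap
      ∘ₗ (LinearMap.id : A →ₗ[k] A)) (sMap k A P) = convOne k := h.symm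
  simp only [LinearMap.comp_id] at h3
  exact h3

lemma conv_s_t : conv k (sMap k A P) (tMap k A P) = convOne k := by
  have h := alghom_conv (Algebra.TensorProduct.includeRight : A →ₐ[k] P ⊗[k] A)
      (HopfAlgebra.antipode (R := k)) (LinearMap.id : A →ₗ[k] A)
  rw [conv_antipode_id, alghom_convOne] at h
  have h3 : conv k (sMap k A P) ((Algebra.TensorProduct.includeRight : A →ₐ[k] P ⊗[k] A).toLinearMap
      ∘ₗ (LinearMap.id : A →ₗ[k] A)) = convOne k := h.symm
  simp only [LinearMap.comp_id] at h3
  exact h3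

lemma emb_tR (f : A →ₗ[k] P) :
    conv k (embMap k A P f) (tMap k A P)
      = TensorProduct.map f LinearMap.id ∘ₗ Coalgebra.comul := by
  ext a
  rw [LinearMap.comp_apply, conv_repr _ _ (Coalgebra.Repr.arbitrary k a),
    show (Coalgebra.comul a : A ⊗[k] A) = ∑ i ∈ (Coalgebra.Repr.arbitrary k a).index,
      (Coalgebra.Repr.arbitrary k a).left i ⊗ₜ[k] (Coalgebra.Repr.arbitrary k a).right i
      from (Coalgebra.Repr.arbitrary k a).eq.symm]
  simp [embMap, tMap, Algebra.TensorProduct.tmul_mul_tmul]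

lemma adCoaction_conv (h : A →ₗ[k] P) :
    TensorProduct.map h LinearMap.id ∘ₗ adCoaction k A =
      conv k (sMap k A P) (conv k (embMap k A P h) (tMap k A P)) := by
  rw [emb_tR]
  ext a
  have hterm : ∀ x y : A,
      (TensorProduct.map h LinearMap.id)
        ((TensorProduct.map LinearMap.id (LinearMap.mul' k A))
          ((TensorProduct.leftComm k A A A)
            ((TensorProduct.map (HopfAlgebra.antipode (R := k)) LinearMap.id)
              ((TensorProduct.map LinearMap.id Coalgebra.comul) (x ⊗ₜ[k] y)))))
      = ∑ j ∈ (Coalgebra.Repr.arbitrary k y).index,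
          h ((Coalgebra.Repr.arbitrary k y).left j) ⊗ₜ[k]
            (HopfAlgebra.antipode (R := k) x * (Coalgebra.Repr.arbitrary k y).right j) := by
    intro x y
    rw [TensorProduct.map_tmul,
      show (Coalgebra.comul y : A ⊗[k] A) = ∑ j ∈ (Coalgebra.Repr.arbitrary k y).index,
        (Coalgebra.Repr.arbitrary k y).left j ⊗ₜ[k] (Coalgebra.Repr.arbitrary k y).right j
        from (Coalgebra.Repr.arbitrary k y).eq.symm]
    simp [TensorProduct.tmul_sum, TensorProduct.leftComm_tmul]
  have hL : (TensorProduct.map h LinearMap.id ∘ₗ adCoaction k A) a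
      = ∑ i ∈ (Coalgebra.Repr.arbitrary k a).index,
          ∑ j ∈ (Coalgebra.Repr.arbitrary k ((Coalgebra.Repr.arbitrary k a).right i)).index,
          h ((Coalgebra.Repr.arbitrary k ((Coalgebra.Repr.arbitrary k a).right i)).left j) ⊗ₜ[k]
            (HopfAlgebra.antipode (R := k) ((Coalgebra.Repr.arbitrary k a).left i) *
              (Coalgebra.Repr.arbitrary k ((Coalgebra.Repr.arbitrary k a).right i)).right j) := by
    rw [LinearMap.comp_apply, adCoaction]
    simp only [LinearMap.coe_comp, Function.comp_apply, LinearEquiv.coe_coe]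
    rw [show (Coalgebra.comul a : A ⊗[k] A) = ∑ i ∈ (Coalgebra.Repr.arbitrary k a).index,
      (Coalgebra.Repr.arbitrary k a).left i ⊗ₜ[k] (Coalgebra.Repr.arbitrary k a).right i
      from (Coalgebra.Repr.arbitrary k a).eq.symm]
    simp only [map_sum]
    exact Finset.sum_congr rfl fun i _ => hterm _ _
  rw [hL, conv_repr _ _ (Coalgebra.Repr.arbitrary k a)]
  refine Finset.sum_congr rfl fun i _ => ?_
  rw [LinearMap.comp_apply,
    show (Coalgebra.comul ((Coalgebra.Repr.arbitrary k a).right i) : A ⊗[k] A)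
      = ∑ j ∈ (Coalgebra.Repr.arbitrary k ((Coalgebra.Repr.arbitrary k a).right i)).index,
        (Coalgebra.Repr.arbitrary k ((Coalgebra.Repr.arbitrary k a).right i)).left j ⊗ₜ[k]
        (Coalgebra.Repr.arbitrary k ((Coalgebra.Repr.arbitrary k a).right i)).right j
      from (Coalgebra.Repr.arbitrary k ((Coalgebra.Repr.arbitrary k a).right i)).eq.symm]
  simp [sMap, tMap, Finset.mul_sum, Algebra.TensorProduct.tmul_mul_tmul]

end SpecificAux

set_option maxHeartbeats 1000000 in
/-- Theorem 5.4 (step 2): for a trivial quantum principal bundle `P(B,A,Φ)`, the map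
`θ_B : γ ↦ Φ⁻¹ * γ * Φ` is a group isomorphism from the gauge group `𝒜(B)`
(convolution invertible unital maps `γ : A → B`, viewed in `P` via `B ⊆ P`) onto
`𝒜(P)` (convolution invertible unital `Ad`-covariant maps `f : A → P`), with inverse
`f ↦ Φ * f * Φ⁻¹`. -/
theorem gauge_group_iso_trivial_bundle
    (ΔR : P →ₗ[k] P ⊗[k] A)
    (hcounit : ∀ u : P, TensorProduct.map LinearMap.id Coalgebra.counit (ΔR u) = u ⊗ₜ (1 : k))
    (hcoassoc : ∀ u : P, TensorProduct.map ΔR LinearMap.id (ΔR u)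
      = (TensorProduct.assoc k P A A).symm (TensorProduct.map LinearMap.id Coalgebra.comul (ΔR u)))
    (hone : ΔR 1 = 1)
    (hmul : ∀ u v : P, ΔR (u * v) = ΔR u * ΔR v)
    (Φ Φinv : A →ₗ[k] P)
    (hΦ1 : Φ 1 = 1)
    (hint : ∀ a : A, ΔR (Φ a) = TensorProduct.map Φ LinearMap.id (Coalgebra.comul a))
    (hinv1 : conv k Φ Φinv = convOne k) (hinv2 : conv k Φinv Φ = convOne k) :
    Set.BijOn (fun γ : A →ₗ[k] P => conv k (conv k Φinv γ) Φ)
      {γ : A →ₗ[k] P | γ 1 = 1 ∧ (∀ a : A, ΔR (γ a) = γ a ⊗ₜ 1) ∧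
        ∃ γ' : A →ₗ[k] P, (∀ a : A, ΔR (γ' a) = γ' a ⊗ₜ 1) ∧
          conv k γ γ' = convOne k ∧ conv k γ' γ = convOne k}
      {f : A →ₗ[k] P | f 1 = 1 ∧
        (∃ g, conv k f g = convOne k ∧ conv k g f = convOne k) ∧
        ∀ a : A, ΔR (f a) = TensorProduct.map f LinearMap.id (adCoaction k A a)} ∧
    Set.InvOn (fun f : A →ₗ[k] P => conv k (conv k Φ f) Φinv)
      (fun γ : A →ₗ[k] P => conv k (conv k Φinv γ) Φ)
      {γ : A →ₗ[k] P | γ 1 = 1 ∧ (∀ a : A, ΔR (γ a) = γ a ⊗ₜ 1) ∧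
        ∃ γ' : A →ₗ[k] P, (∀ a : A, ΔR (γ' a) = γ' a ⊗ₜ 1) ∧
          conv k γ γ' = convOne k ∧ conv k γ' γ = convOne k}
      {f : A →ₗ[k] P | f 1 = 1 ∧
        (∃ g, conv k f g = convOne k ∧ conv k g f = convOne k) ∧
        ∀ a : A, ΔR (f a) = TensorProduct.map f LinearMap.id (adCoaction k A a)} ∧
    (∀ γ₁ γ₂ : A →ₗ[k] P,
      conv k (conv k Φinv (conv k γ₁ γ₂)) Φ
        = conv k (conv k (conv k Φinv γ₁) Φ) (conv k (conv k Φinv γ₂) Φ)) := by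
  classical
  have hq1 : Φ * Φinv = (1 : A →ₗ[k] P) := hinv1
  have hq2 : Φinv * Φ = (1 : A →ₗ[k] P) := hinv2
  have hΦinv1 : Φinv 1 = 1 := by
    have h := LinearMap.congr_fun hinv2 1
    rwa [conv_apply_one, hΦ1, mul_one, convOne_apply_one] at h
  have hDm : ∀ f g : A →ₗ[k] P, ΔR ∘ₗ (f * g) = (ΔR ∘ₗ f) * (ΔR ∘ₗ g) := fun f g =>
    alghom_conv (AlgHom.ofLinearMap ΔR hone hmul) f g
  have hD1 : ΔR ∘ₗ (1 : A →ₗ[k] P) = 1 :=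
    alghom_convOne (AlgHom.ofLinearMap ΔR hone hmul)
  have hE : ∀ f g : A →ₗ[k] P, embMap k A P (f * g) = embMap k A P f * embMap k A P g :=
    fun f g => embMap_conv k A P f g
  have hE1 : embMap k A P (1 : A →ₗ[k] P) = 1 := embMap_convOne k A P
  have hts : tMap k A P * sMap k A P = 1 := conv_t_s k A P
  have hst : sMap k A P * tMap k A P = 1 := conv_s_t k A P
  have hDPhi : ΔR ∘ₗ Φ = embMap k A P Φ * tMap k A P := by
    have h2 : conv k (embMap k A P Φ) (tMap k A P)
        = TensorProduct.map Φ LinearMap.id ∘ₗ Coalgebra.comul := emb_tR k A P Φ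
    rw [← conv_eq_mul, h2]
    ext a
    exact hint a
  have hDPhiInv : ΔR ∘ₗ Φinv = sMap k A P * embMap k A P Φinv := by
    refine left_inv_eq_right_inv (a := ΔR ∘ₗ Φ) ?_ ?_
    · rw [← hDm, hq2, hD1]
    · rw [hDPhi, mul_assoc, mul_cancel_left' hts, ← hE, hq1, hE1]
  have coinv_iff : ∀ γ : A →ₗ[k] P, (∀ a, ΔR (γ a) = γ a ⊗ₜ 1) →
      ΔR ∘ₗ γ = embMap k A P γ := by
    intro γ hγ; ext a
    rw [LinearMap.comp_apply, hγ a]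
    simp [embMap]
  have coinv_of : ∀ γ : A →ₗ[k] P, ΔR ∘ₗ γ = embMap k A P γ →
      ∀ a, ΔR (γ a) = γ a ⊗ₜ 1 := by
    intro γ hγ a
    have := LinearMap.congr_fun hγ a
    simpa [embMap] using this
  have hAd : ∀ h : A →ₗ[k] P, TensorProduct.map h LinearMap.id ∘ₗ adCoaction k A
      = sMap k A P * (embMap k A P h * tMap k A P) := fun h => adCoaction_conv k A P h
  have ad_iff : ∀ f : A →ₗ[k] P,
      (∀ a, ΔR (f a) = TensorProduct.map f LinearMap.id (adCoaction k A a)) →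
      ΔR ∘ₗ f = sMap k A P * (embMap k A P f * tMap k A P) := by
    intro f hf
    rw [← hAd f]
    ext a
    exact hf a
  have ad_of : ∀ f : A →ₗ[k] P, ΔR ∘ₗ f = sMap k A P * (embMap k A P f * tMap k A P) →
      ∀ a, ΔR (f a) = TensorProduct.map f LinearMap.id (adCoaction k A a) := by
    intro f hf a
    exact LinearMap.congr_fun (hf.trans (hAd f).symm) a
  have key1 : ∀ γ : A →ₗ[k] P, ΔR ∘ₗ γ = embMap k A P γ →
      ΔR ∘ₗ ((Φinv * γ) * Φ) = sMap k A P * (embMap k A P ((Φinv * γ) * Φ) * tMap k A P) := by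
    intro γ hγ
    rw [hDm, hDm, hDPhiInv, hγ, hDPhi, hE, hE]
    simp only [mul_assoc]
  have key2 : ∀ f : A →ₗ[k] P, ΔR ∘ₗ f = sMap k A P * (embMap k A P f * tMap k A P) →
      ΔR ∘ₗ ((Φ * f) * Φinv) = embMap k A P ((Φ * f) * Φinv) := by
    intro f hf
    rw [hDm, hDm, hDPhi, hf, hDPhiInv, hE, hE]
    simp only [mul_assoc, mul_cancel_left' hts]
  have key3 : ∀ f g : A →ₗ[k] P, f * g = 1 → g * f = 1 →
      ΔR ∘ₗ f = sMap k A P * (embMap k A P f * tMap k A P) →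
      ΔR ∘ₗ g = sMap k A P * (embMap k A P g * tMap k A P) := by
    intro f g hfg hgf hf
    refine left_inv_eq_right_inv (a := ΔR ∘ₗ f) ?_ ?_
    · rw [← hDm, hgf, hD1]
    · rw [hf]
      have h4 : (sMap k A P * (embMap k A P f * tMap k A P)) *
          (sMap k A P * (embMap k A P g * tMap k A P))
          = sMap k A P * (embMap k A P f * (embMap k A P g * tMap k A P)) := by
        simp only [mul_assoc, mul_cancel_left' hts]
      rw [h4, ← mul_assoc (embMap k A P f), ← hE, hfg, hE1, one_mul, hst]
  have hMaps : Set.MapsTo (fun γ : A →ₗ[k] P => conv k (conv k Φinv γ) Φ)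
      {γ : A →ₗ[k] P | γ 1 = 1 ∧ (∀ a : A, ΔR (γ a) = γ a ⊗ₜ 1) ∧
        ∃ γ' : A →ₗ[k] P, (∀ a : A, ΔR (γ' a) = γ' a ⊗ₜ 1) ∧
          conv k γ γ' = convOne k ∧ conv k γ' γ = convOne k}
      {f : A →ₗ[k] P | f 1 = 1 ∧
        (∃ g, conv k f g = convOne k ∧ conv k g f = convOne k) ∧
        ∀ a : A, ΔR (f a) = TensorProduct.map f LinearMap.id (adCoaction k A a)} := by
    rintro γ ⟨hγ1, hγB, γ', hγ'B, hγγ', hγ'γ⟩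
    simp only [conv_eq_mul, convOne_eq_one] at hγγ' hγ'γ
    refine ⟨?_, ⟨conv k (conv k Φinv γ') Φ, ?_, ?_⟩, ?_⟩
    · show conv k (conv k Φinv γ) Φ 1 = 1
      rw [conv_apply_one, conv_apply_one, hΦinv1, hγ1, hΦ1, one_mul, one_mul]
    · simp only [conv_eq_mul, convOne_eq_one]
      show ((Φinv * γ) * Φ) * ((Φinv * γ') * Φ) = 1
      simp only [mul_assoc, mul_cancel_left' hq1, mul_cancel_left' hγγ', hq2]
    · simp only [conv_eq_mul, convOne_eq_one]
      show ((Φinv * γ') * Φ) * ((Φinv * γ) * Φ) = 1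
      simp only [mul_assoc, mul_cancel_left' hq1, mul_cancel_left' hγ'γ, hq2]
    · exact ad_of _ (key1 γ (coinv_iff γ hγB))
  have hMaps' : Set.MapsTo (fun f : A →ₗ[k] P => conv k (conv k Φ f) Φinv)
      {f : A →ₗ[k] P | f 1 = 1 ∧
        (∃ g, conv k f g = convOne k ∧ conv k g f = convOne k) ∧
        ∀ a : A, ΔR (f a) = TensorProduct.map f LinearMap.id (adCoaction k A a)}
      {γ : A →ₗ[k] P | γ 1 = 1 ∧ (∀ a : A, ΔR (γ a) = γ a ⊗ₜ 1) ∧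
        ∃ γ' : A →ₗ[k] P, (∀ a : A, ΔR (γ' a) = γ' a ⊗ₜ 1) ∧
          conv k γ γ' = convOne k ∧ conv k γ' γ = convOne k} := by
    rintro f ⟨hf1, ⟨g, hfg, hgf⟩, hfAd⟩
    simp only [conv_eq_mul, convOne_eq_one] at hfg hgf
    have hDf : ΔR ∘ₗ f = sMap k A P * (embMap k A P f * tMap k A P) := ad_iff f hfAd
    have hDg : ΔR ∘ₗ g = sMap k A P * (embMap k A P g * tMap k A P) := key3 f g hfg hgf hDf
    refine ⟨?_, ?_, conv k (conv k Φ g) Φinv, ?_, ?_, ?_⟩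
    · show conv k (conv k Φ f) Φinv 1 = 1
      rw [conv_apply_one, conv_apply_one, hΦinv1, hf1, hΦ1, one_mul, one_mul]
    · exact coinv_of _ (key2 f hDf)
    · exact coinv_of _ (key2 g hDg)
    · simp only [conv_eq_mul, convOne_eq_one]
      show ((Φ * f) * Φinv) * ((Φ * g) * Φinv) = 1
      simp only [mul_assoc, mul_cancel_left' hq2, mul_cancel_left' hfg, hq1]
    · simp only [conv_eq_mul, convOne_eq_one]
      show ((Φ * g) * Φinv) * ((Φ * f) * Φinv) = 1
      simp only [mul_assoc, mul_cancel_left' hq2, mul_cancel_left' hgf, hq1]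
  have hInv : Set.InvOn (fun f : A →ₗ[k] P => conv k (conv k Φ f) Φinv)
      (fun γ : A →ₗ[k] P => conv k (conv k Φinv γ) Φ)
      {γ : A →ₗ[k] P | γ 1 = 1 ∧ (∀ a : A, ΔR (γ a) = γ a ⊗ₜ 1) ∧
        ∃ γ' : A →ₗ[k] P, (∀ a : A, ΔR (γ' a) = γ' a ⊗ₜ 1) ∧
          conv k γ γ' = convOne k ∧ conv k γ' γ = convOne k}
      {f : A →ₗ[k] P | f 1 = 1 ∧
        (∃ g, conv k f g = convOne k ∧ conv k g f = convOne k) ∧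
        ∀ a : A, ΔR (f a) = TensorProduct.map f LinearMap.id (adCoaction k A a)} := by
    constructor
    · intro γ _
      show (Φ * ((Φinv * γ) * Φ)) * Φinv = γ
      simp only [mul_assoc, mul_cancel_left' hq1, mul_cancel_left' hq2, hq1, hq2, mul_one]
    · intro f _
      show (Φinv * ((Φ * f) * Φinv)) * Φ = f
      simp only [mul_assoc, mul_cancel_left' hq1, mul_cancel_left' hq2, hq1, hq2, mul_one]
  refine ⟨Set.InvOn.bijOn hInv hMaps hMaps', hInv, ?_⟩
  intro γ₁ γ₂
  simp only [conv_eq_mul]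
  show (Φinv * (γ₁ * γ₂)) * Φ = ((Φinv * γ₁) * Φ) * ((Φinv * γ₂) * Φ)
  simp only [mul_assoc, mul_cancel_left' hq1]

end ConvGeneral
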